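/- Let W1, W2 be finitely-valued random variables and let Y1^n = (Y_{1,1}, …, Y_{1,n}) and Y2^n = (Y_{2,1}, …, Y_{2,n}) be finitely-valued sequences on the same probability space such that, for each 1 ≤ i ≤ n, Y1^{i−1} is conditionally independent of (W1, W2, Y_{2,i}) given Y2^{i−1}. Then I(W2; Y2^n | W1) ≤ ∑_{i=1}^{n} I( (W1, W2, Y2^{i−1}); Y_{2,i} | (W1, Y1^{i−1}) ). -/

import Mathlib

open scoped BigOperators Classical

noncomputable section

namespace BRSec

variable {Ω : Type*} [Fintype Ω]

/-- Probability that the random variable `X` takes the value `a`, under the weight `p`. -/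
def prb (p : Ω → ℝ) {α : Type*} (X : Ω → α) (a : α) : ℝ :=
  ∑ ω, if X ω = a then p ω else 0

/-- `p` is a probability mass function on the finite sample space `Ω`. -/
def IsPMF (p : Ω → ℝ) : Prop :=
  (∀ ω, 0 ≤ p ω) ∧ ∑ ω, p ω = 1

/-- Shannon entropy of the finitely-valued random variable `X`. -/
def H (p : Ω → ℝ) {α : Type*} [Fintype α] (X : Ω → α) : ℝ :=
  ∑ a, Real.negMulLog (prb p X a)

/-- Mutual information `I(X;Y)`. -/
def MI (p : Ω → ℝ) {α β : Type*} [Fintype α] [Fintype β] (X : Ω → α) (Y : Ω → β) : ℝ :=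
  H p X + H p Y - H p fun ω => (X ω, Y ω)

/-- Conditional mutual information `I(X;Y|Z)`. -/
def CMI (p : Ω → ℝ) {α β γ : Type*} [Fintype α] [Fintype β] [Fintype γ]
    (X : Ω → α) (Y : Ω → β) (Z : Ω → γ) : ℝ :=
  (H p fun ω => (X ω, Z ω)) + (H p fun ω => (Y ω, Z ω))
    - (H p fun ω => (X ω, Y ω, Z ω)) - H p Z

/-- `X → Y → Z` is a Markov chain: `X` and `Z` are conditionally independent given `Y`. -/
def MarkovTriple (p : Ω → ℝ) {α β γ : Type*} (X : Ω → α) (Y : Ω → β) (Z : Ω → γ) : Prop :=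
  ∀ a b c,
    prb p (fun ω => (X ω, Y ω, Z ω)) (a, b, c) * prb p Y b
      = prb p (fun ω => (X ω, Y ω)) (a, b) * prb p (fun ω => (Y ω, Z ω)) (b, c)


/- ### auxiliary lemmas -/

section Aux
set_option linter.unusedSectionVars false

variable (p : Ω → ℝ)

lemma prb_nonneg (hp : ∀ ω, 0 ≤ p ω) {α : Type*} (X : Ω → α) (a : α) : 0 ≤ prb p X a :=
  Finset.sum_nonneg fun ω _ => by split <;> simp [hp ω]

lemma prb_transfer {α β : Type*} {X : Ω → α} {Y : Ω → β}
    (f : α → β) (g : β → α) (hf : ∀ ω, f (X ω) = Y ω) (hg : ∀ ω, g (Y ω) = X ω)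
    {a : α} (ha : prb p X a ≠ 0) :
    prb p Y (f a) = prb p X a ∧ g (f a) = a := by
  have hex : ∃ ω, X ω = a := by
    by_contra hcon
    push_neg at hcon
    exact ha (Finset.sum_eq_zero fun ω _ => if_neg (hcon ω))
  obtain ⟨ω0, hω0⟩ := hex
  have hgf : g (f a) = a := by rw [← hω0, hf, hg]
  refine ⟨Finset.sum_congr rfl fun ω _ => ?_, hgf⟩
  refine if_congr ⟨fun h => ?_, fun h => ?_⟩ rfl rfl
  · rw [← hg ω, h, hgf]
  · rw [← hf ω, h]

lemma H_filter {γ : Type*} [Fintype γ] (W : Ω → γ) :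
    H p W = ∑ c ∈ Finset.univ.filter (fun c => prb p W c ≠ 0), Real.negMulLog (prb p W c) := by
  refine (Finset.sum_subset (Finset.filter_subset _ _) ?_).symm
  intro c _ hc
  simp only [Finset.mem_filter, Finset.mem_univ, true_and, not_not] at hc
  rw [hc, Real.negMulLog_zero]

lemma H_congr {α β : Type*} [Fintype α] [Fintype β] {X : Ω → α} {Y : Ω → β}
    (f : α → β) (g : β → α) (hf : ∀ ω, f (X ω) = Y ω) (hg : ∀ ω, g (Y ω) = X ω) :
    H p X = H p Y := by
  classical
  rw [H_filter p X, H_filter p Y]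
  refine Finset.sum_bij' (fun a _ => f a) (fun b _ => g b) ?_ ?_ ?_ ?_ ?_
  · intro a ha
    simp only [Finset.mem_filter, Finset.mem_univ, true_and] at ha ⊢
    rw [(prb_transfer p f g hf hg ha).1]
    exact ha
  · intro b hb
    simp only [Finset.mem_filter, Finset.mem_univ, true_and] at hb ⊢
    rw [(prb_transfer p g f hg hf hb).1]
    exact hb
  · intro a ha
    simp only [Finset.mem_filter, Finset.mem_univ, true_and] at ha
    exact (prb_transfer p f g hf hg ha).2
  · intro b hb
    simp only [Finset.mem_filter, Finset.mem_univ, true_and] at hb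
    exact (prb_transfer p g f hg hf hb).2
  · intro a ha
    simp only [Finset.mem_filter, Finset.mem_univ, true_and] at ha
    rw [(prb_transfer p f g hf hg ha).1]

variable {α β γ : Type*} [Fintype α] [Fintype β] [Fintype γ]

lemma prb_marg13 (X : Ω → α) (Y : Ω → β) (Z : Ω → γ) (x : α) (z : γ) :
    prb p (fun ω => (X ω, Z ω)) (x, z) = ∑ y, prb p (fun ω => (X ω, Y ω, Z ω)) (x, y, z) := by
  unfold prb
  rw [Finset.sum_comm]
  refine Finset.sum_congr rfl fun ω _ => ?_
  by_cases h1 : X ω = x <;> by_cases h2 : Z ω = z <;>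
    simp [Prod.ext_iff, h1, h2]

lemma prb_marg23 (X : Ω → α) (Y : Ω → β) (Z : Ω → γ) (y : β) (z : γ) :
    prb p (fun ω => (Y ω, Z ω)) (y, z) = ∑ x, prb p (fun ω => (X ω, Y ω, Z ω)) (x, y, z) := by
  unfold prb
  rw [Finset.sum_comm]
  refine Finset.sum_congr rfl fun ω _ => ?_
  by_cases h1 : Y ω = y <;> by_cases h2 : Z ω = z <;>
    simp [Prod.ext_iff, h1, h2]

lemma prb_marg2 (X : Ω → α) (Z : Ω → γ) (z : γ) :
    prb p Z z = ∑ x, prb p (fun ω => (X ω, Z ω)) (x, z) := by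
  unfold prb
  rw [Finset.sum_comm]
  refine Finset.sum_congr rfl fun ω _ => ?_
  by_cases h2 : Z ω = z <;> simp [Prod.ext_iff, h2]

lemma prb_marg3 (X : Ω → α) (Y : Ω → β) (Z : Ω → γ) (z : γ) :
    prb p Z z = ∑ x, ∑ y, prb p (fun ω => (X ω, Y ω, Z ω)) (x, y, z) := by
  rw [prb_marg2 p X Z z]
  exact Finset.sum_congr rfl fun x _ => prb_marg13 p X Y Z x z

lemma sum_rot3 (f : α → β → γ → ℝ) :
    ∑ z, ∑ x, ∑ y, f x y z = ∑ x, ∑ y, ∑ z, f x y z := by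
  calc ∑ z, ∑ x, ∑ y, f x y z = ∑ x, ∑ z, ∑ y, f x y z :=
        Finset.sum_comm
    _ = ∑ x, ∑ y, ∑ z, f x y z := Finset.sum_congr rfl fun x _ => Finset.sum_comm

lemma neg_sum_mul (a : α → ℝ) (c : ℝ) : -((∑ i, a i) * c) = ∑ i, -(a i * c) := by
  rw [Finset.sum_mul]
  exact (Finset.sum_neg_distrib _).symm

lemma negMulLog_sum (a : α → ℝ) (s : ℝ) (hs : s = ∑ i, a i) :
    Real.negMulLog s = ∑ i, -(a i * Real.log s) := by
  show -s * Real.log s = _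
  set c := Real.log s with hc
  rw [neg_mul, hs, neg_sum_mul]

lemma negMulLog_sum₂ (a : α → β → ℝ) (s : ℝ) (hs : s = ∑ i, ∑ j, a i j) :
    Real.negMulLog s = ∑ i, ∑ j, -(a i j * Real.log s) := by
  rw [negMulLog_sum (fun i => ∑ j, a i j) s hs]
  exact Finset.sum_congr rfl fun i _ => neg_sum_mul _ _

lemma sum3_comb (f g h k : α → β → γ → ℝ) :
    ((∑ x, ∑ y, ∑ z, f x y z) + (∑ x, ∑ y, ∑ z, g x y z)
      - (∑ x, ∑ y, ∑ z, h x y z)) - (∑ x, ∑ y, ∑ z, k x y z)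
    = ∑ x, ∑ y, ∑ z, (f x y z + g x y z - h x y z - k x y z) := by
  rw [← Finset.sum_add_distrib, ← Finset.sum_sub_distrib, ← Finset.sum_sub_distrib]
  refine Finset.sum_congr rfl fun x _ => ?_
  rw [← Finset.sum_add_distrib, ← Finset.sum_sub_distrib, ← Finset.sum_sub_distrib]
  refine Finset.sum_congr rfl fun y _ => ?_
  rw [← Finset.sum_add_distrib, ← Finset.sum_sub_distrib, ← Finset.sum_sub_distrib]

lemma CMI_eq_sum (X : Ω → α) (Y : Ω → β) (Z : Ω → γ) :
    CMI p X Y Z = ∑ x, ∑ y, ∑ z,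
      prb p (fun ω => (X ω, Y ω, Z ω)) (x, y, z) *
        (Real.log (prb p (fun ω => (X ω, Y ω, Z ω)) (x, y, z))
          + Real.log (prb p Z z)
          - Real.log (prb p (fun ω => (X ω, Z ω)) (x, z))
          - Real.log (prb p (fun ω => (Y ω, Z ω)) (y, z))) := by
  classical
  set q : α → β → γ → ℝ := fun x y z => prb p (fun ω => (X ω, Y ω, Z ω)) (x, y, z) with hq
  have hA : (H p fun ω => (X ω, Z ω))
      = ∑ x, ∑ y, ∑ z, -(q x y z * Real.log (prb p (fun ω => (X ω, Z ω)) (x, z))) := by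
    rw [H, Fintype.sum_prod_type]
    refine Finset.sum_congr rfl fun x _ => ?_
    calc ∑ z, Real.negMulLog (prb p (fun ω => (X ω, Z ω)) (x, z))
        = ∑ z, ∑ y, -(q x y z * Real.log (prb p (fun ω => (X ω, Z ω)) (x, z))) := by
          exact Finset.sum_congr rfl fun z _ =>
            negMulLog_sum _ _ (prb_marg13 p X Y Z x z)
      _ = ∑ y, ∑ z, -(q x y z * Real.log (prb p (fun ω => (X ω, Z ω)) (x, z))) :=
          Finset.sum_comm
  have hB : (H p fun ω => (Y ω, Z ω))
      = ∑ x, ∑ y, ∑ z, -(q x y z * Real.log (prb p (fun ω => (Y ω, Z ω)) (y, z))) := by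
    rw [H, Fintype.sum_prod_type]
    calc ∑ y, ∑ z, Real.negMulLog (prb p (fun ω => (Y ω, Z ω)) (y, z))
        = ∑ y, ∑ z, ∑ x, -(q x y z * Real.log (prb p (fun ω => (Y ω, Z ω)) (y, z))) := by
          exact Finset.sum_congr rfl fun y _ => Finset.sum_congr rfl fun z _ =>
            negMulLog_sum _ _ (prb_marg23 p X Y Z y z)
      _ = ∑ y, ∑ x, ∑ z, -(q x y z * Real.log (prb p (fun ω => (Y ω, Z ω)) (y, z))) :=
          Finset.sum_congr rfl fun y _ => Finset.sum_comm
      _ = ∑ x, ∑ y, ∑ z, -(q x y z * Real.log (prb p (fun ω => (Y ω, Z ω)) (y, z))) :=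
          Finset.sum_comm
  have hC : H p Z = ∑ x, ∑ y, ∑ z, -(q x y z * Real.log (prb p Z z)) := by
    rw [H]
    calc ∑ z, Real.negMulLog (prb p Z z)
        = ∑ z, ∑ x, ∑ y, -(q x y z * Real.log (prb p Z z)) := by
          exact Finset.sum_congr rfl fun z _ =>
            negMulLog_sum₂ _ _ (prb_marg3 p X Y Z z)
      _ = ∑ x, ∑ y, ∑ z, -(q x y z * Real.log (prb p Z z)) := sum_rot3 _
  have hD : (H p fun ω => (X ω, Y ω, Z ω)) = ∑ x, ∑ y, ∑ z, Real.negMulLog (q x y z) := by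
    rw [H, Fintype.sum_prod_type]
    exact Finset.sum_congr rfl fun x _ => Fintype.sum_prod_type _
  rw [CMI, hA, hB, hC, hD, sum3_comb]
  refine Finset.sum_congr rfl fun x _ => Finset.sum_congr rfl fun y _ =>
    Finset.sum_congr rfl fun z _ => ?_
  rw [Real.negMulLog]
  ring

lemma CMI_nonneg (hp : ∀ ω, 0 ≤ p ω) (X : Ω → α) (Y : Ω → β) (Z : Ω → γ) :
    0 ≤ CMI p X Y Z := by
  classical
  rw [CMI_eq_sum]
  set q : α → β → γ → ℝ := fun x y z => prb p (fun ω => (X ω, Y ω, Z ω)) (x, y, z) with hq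
  set A : α → γ → ℝ := fun x z => prb p (fun ω => (X ω, Z ω)) (x, z) with hA
  set B : β → γ → ℝ := fun y z => prb p (fun ω => (Y ω, Z ω)) (y, z) with hB
  set C : γ → ℝ := fun z => prb p Z z with hC
  have hq0 : ∀ x y z, 0 ≤ q x y z := fun x y z => prb_nonneg p hp _ _
  have hmA : ∀ x z, A x z = ∑ y, q x y z := fun x z => prb_marg13 p X Y Z x z
  have hmB : ∀ y z, B y z = ∑ x, q x y z := fun y z => prb_marg23 p X Y Z y z
  have hmC : ∀ z, C z = ∑ x, ∑ y, q x y z := fun z => prb_marg3 p X Y Z z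
  have hqA : ∀ x y z, q x y z ≤ A x z := fun x y z => by
    rw [hmA]
    exact Finset.single_le_sum (fun y' _ => hq0 x y' z) (Finset.mem_univ y)
  have hqB : ∀ x y z, q x y z ≤ B y z := fun x y z => by
    rw [hmB]
    exact Finset.single_le_sum (fun x' _ => hq0 x' y z) (Finset.mem_univ x)
  have hqC : ∀ x y z, q x y z ≤ C z := fun x y z => by
    rw [hmC]
    refine le_trans (hqA x y z) ?_
    rw [hmA]
    exact Finset.single_le_sum
      (fun x' _ => Finset.sum_nonneg fun y' _ => hq0 x' y' z) (Finset.mem_univ x)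
  set G : α → β → γ → ℝ := fun x y z => if C z = 0 then 0 else A x z * B y z / C z with hG
  have hG0 : ∀ x y z, 0 ≤ G x y z := by
    intro x y z
    rw [hG]
    dsimp only
    split
    · exact le_refl 0
    · exact div_nonneg (mul_nonneg (by rw [hmA]; exact Finset.sum_nonneg fun _ _ => hq0 _ _ _)
        (by rw [hmB]; exact Finset.sum_nonneg fun _ _ => hq0 _ _ _))
        (by rw [hmC]; exact Finset.sum_nonneg fun _ _ => Finset.sum_nonneg fun _ _ => hq0 _ _ _)
  have hterm : ∀ x y z, q x y z - G x y z ≤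
      q x y z * (Real.log (q x y z) + Real.log (C z) - Real.log (A x z) - Real.log (B y z)) := by
    intro x y z
    by_cases hqz : q x y z = 0
    · rw [hqz, zero_mul, zero_sub]
      linarith [hG0 x y z]
    · have hq' : 0 < q x y z := lt_of_le_of_ne (hq0 x y z) (Ne.symm hqz)
      have hA' : 0 < A x z := lt_of_lt_of_le hq' (hqA x y z)
      have hB' : 0 < B y z := lt_of_lt_of_le hq' (hqB x y z)
      have hC' : 0 < C z := lt_of_lt_of_le hq' (hqC x y z)
      have hGv : G x y z = A x z * B y z / C z := by rw [hG]; exact if_neg hC'.ne'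
      set t : ℝ := A x z * B y z / (q x y z * C z) with ht
      have ht' : 0 < t := by
        rw [ht]
        positivity
      have h1 : Real.log t ≤ t - 1 := Real.log_le_sub_one_of_pos ht'
      have h2 : Real.log t = Real.log (A x z) + Real.log (B y z)
          - Real.log (q x y z) - Real.log (C z) := by
        rw [ht, Real.log_div (by positivity) (by positivity),
          Real.log_mul hA'.ne' hB'.ne', Real.log_mul hq'.ne' hC'.ne']
        ring
      have h3 : q x y z * (Real.log (q x y z) + Real.log (C z)
          - Real.log (A x z) - Real.log (B y z)) = -(q x y z * Real.log t) := by
        rw [h2]; ring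
      have h4 : q x y z * Real.log t ≤ q x y z * (t - 1) :=
        mul_le_mul_of_nonneg_left h1 hq'.le
      have h5 : q x y z * t = A x z * B y z / C z := by
        rw [ht]
        field_simp
      rw [h3, hGv]
      linarith
  have hsum : ∑ x, ∑ y, ∑ z, (q x y z - G x y z) = 0 := by
    have e1 : ∑ x, ∑ y, ∑ z, (q x y z - G x y z)
        = (∑ x, ∑ y, ∑ z, q x y z) - ∑ x, ∑ y, ∑ z, G x y z := by
      rw [← Finset.sum_sub_distrib]
      refine Finset.sum_congr rfl fun x _ => ?_
      rw [← Finset.sum_sub_distrib]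
      refine Finset.sum_congr rfl fun y _ => ?_
      rw [← Finset.sum_sub_distrib]
    have e2 : ∑ x, ∑ y, ∑ z, q x y z = ∑ z, C z := by
      rw [← sum_rot3 (fun x y z => q x y z)]
      exact Finset.sum_congr rfl fun z _ => (hmC z).symm
    have e3 : ∑ x, ∑ y, ∑ z, G x y z = ∑ z, C z := by
      rw [← sum_rot3 (fun x y z => G x y z)]
      refine Finset.sum_congr rfl fun z _ => ?_
      by_cases hCz : C z = 0
      · rw [hCz]
        refine Finset.sum_eq_zero fun x _ => Finset.sum_eq_zero fun y _ => ?_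
        rw [hG]
        exact if_pos hCz
      · have : ∀ x y, G x y z = A x z * B y z / C z := fun x y => by
          rw [hG]; exact if_neg hCz
        calc ∑ x, ∑ y, G x y z = ∑ x, ∑ y, A x z * B y z / C z :=
              Finset.sum_congr rfl fun x _ => Finset.sum_congr rfl fun y _ => this x y
          _ = (∑ x, A x z) * (∑ y, B y z) / C z := by
              rw [Finset.sum_mul_sum, Finset.sum_div]
              exact Finset.sum_congr rfl fun x _ => by rw [Finset.sum_div]
          _ = C z := by
              have hAC : ∑ x, A x z = C z := by
                rw [hmC]
                exact Finset.sum_congr rfl fun x _ => hmA x z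
              have hBC : ∑ y, B y z = C z := by
                rw [hmC, Finset.sum_comm]
                exact Finset.sum_congr rfl fun y _ => hmB y z
              rw [hAC, hBC, mul_div_assoc, div_self hCz, mul_one]
    rw [e1, e2, e3, sub_self]
  calc (0:ℝ) = ∑ x, ∑ y, ∑ z, (q x y z - G x y z) := hsum.symm
    _ ≤ ∑ x, ∑ y, ∑ z, q x y z * (Real.log (q x y z) + Real.log (C z)
          - Real.log (A x z) - Real.log (B y z)) :=
        Finset.sum_le_sum fun x _ => Finset.sum_le_sum fun y _ =>
          Finset.sum_le_sum fun z _ => hterm x y z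

lemma prb_swap2 (X : Ω → α) (Y : Ω → β) (a : α) (b : β) :
    prb p (fun ω => (X ω, Y ω)) (a, b) = prb p (fun ω => (Y ω, X ω)) (b, a) := by
  refine Finset.sum_congr rfl fun ω _ => ?_
  by_cases h1 : X ω = a <;> by_cases h2 : Y ω = b <;> simp [Prod.ext_iff, h1, h2]

lemma prb_rot3 (X : Ω → α) (Y : Ω → β) (Z : Ω → γ) (a : α) (b : β) (c : γ) :
    prb p (fun ω => (X ω, Y ω, Z ω)) (a, b, c)
      = prb p (fun ω => (X ω, Z ω, Y ω)) (a, c, b) := by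
  refine Finset.sum_congr rfl fun ω _ => ?_
  by_cases h1 : X ω = a <;> by_cases h2 : Y ω = b <;> by_cases h3 : Z ω = c <;>
    simp [Prod.ext_iff, h1, h2, h3]

/-- If `X — Y — Z` is a Markov chain then `I(X;Z|Y) = 0`. -/
lemma markov_CMI_zero (hp : ∀ ω, 0 ≤ p ω) (X : Ω → α) (Y : Ω → β) (Z : Ω → γ)
    (h : MarkovTriple p X Y Z) : CMI p X Z Y = 0 := by
  classical
  rw [CMI_eq_sum]
  refine Finset.sum_eq_zero fun a _ => Finset.sum_eq_zero fun c _ =>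
    Finset.sum_eq_zero fun b _ => ?_
  set q : ℝ := prb p (fun ω => (X ω, Z ω, Y ω)) (a, c, b) with hqdef
  by_cases hq : q = 0
  · rw [hq, zero_mul]
  · have hq0 : 0 ≤ q := prb_nonneg p hp _ _
    have hq' : 0 < q := lt_of_le_of_ne hq0 (Ne.symm hq)
    have hXY : q ≤ prb p (fun ω => (X ω, Y ω)) (a, b) := by
      rw [prb_marg13 p X Z Y a b]
      exact Finset.single_le_sum
        (f := fun c' => prb p (fun ω => (X ω, Z ω, Y ω)) (a, c', b))
        (fun c' _ => prb_nonneg p hp _ _) (Finset.mem_univ c)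
    have hZY : q ≤ prb p (fun ω => (Z ω, Y ω)) (c, b) := by
      rw [prb_marg23 p X Z Y c b]
      exact Finset.single_le_sum
        (f := fun a' => prb p (fun ω => (X ω, Z ω, Y ω)) (a', c, b))
        (fun a' _ => prb_nonneg p hp _ _) (Finset.mem_univ a)
    have hY : q ≤ prb p Y b := by
      refine le_trans hXY ?_
      rw [prb_marg2 p X Y b]
      exact Finset.single_le_sum
        (f := fun a' => prb p (fun ω => (X ω, Y ω)) (a', b))
        (fun a' _ => prb_nonneg p hp _ _) (Finset.mem_univ a)
    have hXY' : 0 < prb p (fun ω => (X ω, Y ω)) (a, b) := lt_of_lt_of_le hq' hXY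
    have hZY' : 0 < prb p (fun ω => (Z ω, Y ω)) (c, b) := lt_of_lt_of_le hq' hZY
    have hY' : 0 < prb p Y b := lt_of_lt_of_le hq' hY
    have hfact := h a b c
    rw [prb_rot3 p X Y Z a b c, prb_swap2 p Y Z b c, ← hqdef] at hfact
    have e : Real.log q + Real.log (prb p Y b)
        = Real.log (prb p (fun ω => (X ω, Y ω)) (a, b))
          + Real.log (prb p (fun ω => (Z ω, Y ω)) (c, b)) := by
      rw [← Real.log_mul hq'.ne' hY'.ne', ← Real.log_mul hXY'.ne' hZY'.ne', hfact]
    rw [e]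
    ring

lemma CMI_congr {α' β' γ' : Type*} [Fintype α'] [Fintype β'] [Fintype γ']
    {X : Ω → α} {Y : Ω → β} {Z : Ω → γ} {X' : Ω → α'} {Y' : Ω → β'} {Z' : Ω → γ'}
    (fX : α → α') (gX : α' → α) (fY : β → β') (gY : β' → β) (fZ : γ → γ') (gZ : γ' → γ)
    (hfX : ∀ ω, fX (X ω) = X' ω) (hgX : ∀ ω, gX (X' ω) = X ω)
    (hfY : ∀ ω, fY (Y ω) = Y' ω) (hgY : ∀ ω, gY (Y' ω) = Y ω)
    (hfZ : ∀ ω, fZ (Z ω) = Z' ω) (hgZ : ∀ ω, gZ (Z' ω) = Z ω) :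
    CMI p X Y Z = CMI p X' Y' Z' := by
  have h1 : (H p fun ω => (X ω, Z ω)) = H p fun ω => (X' ω, Z' ω) :=
    H_congr p (fun t => (fX t.1, fZ t.2)) (fun t => (gX t.1, gZ t.2))
      (fun ω => by simp [hfX, hfZ]) (fun ω => by simp [hgX, hgZ])
  have h2 : (H p fun ω => (Y ω, Z ω)) = H p fun ω => (Y' ω, Z' ω) :=
    H_congr p (fun t => (fY t.1, fZ t.2)) (fun t => (gY t.1, gZ t.2))
      (fun ω => by simp [hfY, hfZ]) (fun ω => by simp [hgY, hgZ])
  have h3 : (H p fun ω => (X ω, Y ω, Z ω)) = H p fun ω => (X' ω, Y' ω, Z' ω) :=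
    H_congr p (fun t => (fX t.1, fY t.2.1, fZ t.2.2)) (fun t => (gX t.1, gY t.2.1, gZ t.2.2))
      (fun ω => by simp [hfX, hfY, hfZ]) (fun ω => by simp [hgX, hgY, hgZ])
  have h4 : H p Z = H p Z' := H_congr p fZ gZ hfZ hgZ
  rw [CMI, CMI, h1, h2, h3, h4]

lemma CMI_symm (X : Ω → α) (Y : Ω → β) (Z : Ω → γ) : CMI p X Y Z = CMI p Y X Z := by
  have h3 : (H p fun ω => (X ω, Y ω, Z ω)) = H p fun ω => (Y ω, X ω, Z ω) :=
    H_congr p (fun t => (t.2.1, t.1, t.2.2)) (fun t => (t.2.1, t.1, t.2.2))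
      (fun ω => rfl) (fun ω => rfl)
  rw [CMI, CMI, h3]
  ring

/-- Chain rule for conditional mutual information. -/
lemma CMI_chain (X : Ω → α) (Y : Ω → β) (Z : Ω → γ) {δ : Type*} [Fintype δ] (W : Ω → δ) :
    CMI p X (fun ω => (Y ω, Z ω)) W
      = CMI p X Y W + CMI p X Z (fun ω => (W ω, Y ω)) := by
  have h1 : (H p fun ω => ((Y ω, Z ω), W ω)) = H p fun ω => (Z ω, (W ω, Y ω)) :=
    H_congr p (fun t => (t.1.2, t.2, t.1.1)) (fun t => ((t.2.2, t.1), t.2.1))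
      (fun ω => rfl) (fun ω => rfl)
  have h2 : (H p fun ω => (X ω, (Y ω, Z ω), W ω)) = H p fun ω => (X ω, Z ω, (W ω, Y ω)) :=
    H_congr p (fun t => (t.1, t.2.1.2, t.2.2, t.2.1.1)) (fun t => (t.1, (t.2.2.2, t.2.1), t.2.2.1))
      (fun ω => rfl) (fun ω => rfl)
  have h3 : (H p fun ω => (Y ω, W ω)) = H p fun ω => (W ω, Y ω) :=
    H_congr p (fun t => (t.2, t.1)) (fun t => (t.2, t.1)) (fun ω => rfl) (fun ω => rfl)
  have h4 : (H p fun ω => (X ω, (W ω, Y ω))) = H p fun ω => (X ω, Y ω, W ω) :=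
    H_congr p (fun t => (t.1, t.2.2, t.2.1)) (fun t => (t.1, (t.2.2, t.2.1)))
      (fun ω => rfl) (fun ω => rfl)
  rw [CMI, CMI, CMI, h1, h2, h3, h4]
  ring

/-- CMI vanishes when the middle variable is constant. -/
lemma CMI_const_snd {U : Type*} [Fintype U] (X : Ω → α) (Z : Ω → γ) (Y : Ω → U)
    (u0 : U) (hu : ∀ ω, Y ω = u0) : CMI p X Y Z = 0 := by
  have h1 : (H p fun ω => (Y ω, Z ω)) = H p Z :=
    H_congr p (fun t => t.2) (fun z => (u0, z)) (fun ω => rfl)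
      (fun ω => by rw [hu ω])
  have h2 : (H p fun ω => (X ω, Y ω, Z ω)) = H p fun ω => (X ω, Z ω) :=
    H_congr p (fun t => (t.1, t.2.2)) (fun t => (t.1, u0, t.2)) (fun ω => rfl)
      (fun ω => by rw [hu ω])
  rw [CMI, h1, h2]
  ring

lemma per_letter_bound {𝒲₁ 𝒲₂ σ τ ρ : Type*}
    [Fintype 𝒲₁] [Fintype 𝒲₂] [Fintype σ] [Fintype τ] [Fintype ρ]
    (p : Ω → ℝ) (hp0 : ∀ ω, 0 ≤ p ω) (W1 : Ω → 𝒲₁) (W2 : Ω → 𝒲₂)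
    (Q : Ω → σ) (P : Ω → τ) (B : Ω → ρ)
    (hM : MarkovTriple p Q P (fun ω => (W1 ω, W2 ω, B ω))) :
    CMI p W2 B (fun ω => (W1 ω, P ω))
      ≤ CMI p (fun ω => (W1 ω, W2 ω, P ω)) B (fun ω => (W1 ω, Q ω)) := by
  have h0 : CMI p Q (fun ω => (W1 ω, W2 ω, B ω)) P = 0 :=
    markov_CMI_zero p hp0 Q P (fun ω => (W1 ω, W2 ω, B ω)) hM
  have c1 : CMI p Q (fun ω => (W1 ω, W2 ω, B ω)) P
      = CMI p Q W1 P + CMI p Q (fun ω => (W2 ω, B ω)) (fun ω => (P ω, W1 ω)) :=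
    CMI_chain p Q W1 (fun ω => (W2 ω, B ω)) P
  have n1 : 0 ≤ CMI p Q W1 P := CMI_nonneg p hp0 _ _ _
  have h1 : CMI p Q (fun ω => (W2 ω, B ω)) (fun ω => (P ω, W1 ω)) = 0 := by
    have n2 : 0 ≤ CMI p Q (fun ω => (W2 ω, B ω)) (fun ω => (P ω, W1 ω)) :=
      CMI_nonneg p hp0 _ _ _
    linarith
  have c2 : CMI p Q (fun ω => (B ω, W2 ω)) (fun ω => (P ω, W1 ω))
      = CMI p Q (fun ω => (W2 ω, B ω)) (fun ω => (P ω, W1 ω)) :=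
    CMI_congr p id id (fun t => (t.2, t.1)) (fun t => (t.2, t.1)) id id
      (fun _ => rfl) (fun _ => rfl) (fun _ => rfl) (fun _ => rfl) (fun _ => rfl) (fun _ => rfl)
  have c3 : CMI p Q (fun ω => (B ω, W2 ω)) (fun ω => (P ω, W1 ω))
      = CMI p Q B (fun ω => (P ω, W1 ω)) + CMI p Q W2 (fun ω => ((P ω, W1 ω), B ω)) :=
    CMI_chain p Q B W2 (fun ω => (P ω, W1 ω))
  have h2 : CMI p Q B (fun ω => (P ω, W1 ω)) = 0 := by
    have n3 : 0 ≤ CMI p Q B (fun ω => (P ω, W1 ω)) := CMI_nonneg p hp0 _ _ _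
    have n4 : 0 ≤ CMI p Q W2 (fun ω => ((P ω, W1 ω), B ω)) := CMI_nonneg p hp0 _ _ _
    linarith
  have c4 : CMI p B (fun ω => (Q ω, W2 ω)) (fun ω => (P ω, W1 ω))
      = CMI p B Q (fun ω => (P ω, W1 ω)) + CMI p B W2 (fun ω => ((P ω, W1 ω), Q ω)) :=
    CMI_chain p B Q W2 (fun ω => (P ω, W1 ω))
  have c5 : CMI p B Q (fun ω => (P ω, W1 ω)) = CMI p Q B (fun ω => (P ω, W1 ω)) :=
    CMI_symm p B Q _
  have c6 : CMI p B (fun ω => (W2 ω, Q ω)) (fun ω => (P ω, W1 ω))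
      = CMI p B (fun ω => (Q ω, W2 ω)) (fun ω => (P ω, W1 ω)) :=
    CMI_congr p id id (fun t => (t.2, t.1)) (fun t => (t.2, t.1)) id id
      (fun _ => rfl) (fun _ => rfl) (fun _ => rfl) (fun _ => rfl) (fun _ => rfl) (fun _ => rfl)
  have c7 : CMI p B (fun ω => (W2 ω, Q ω)) (fun ω => (P ω, W1 ω))
      = CMI p B W2 (fun ω => (P ω, W1 ω)) + CMI p B Q (fun ω => ((P ω, W1 ω), W2 ω)) :=
    CMI_chain p B W2 Q (fun ω => (P ω, W1 ω))
  have n5 : 0 ≤ CMI p B Q (fun ω => ((P ω, W1 ω), W2 ω)) := CMI_nonneg p hp0 _ _ _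
  have step1 : CMI p B W2 (fun ω => (P ω, W1 ω))
      ≤ CMI p B W2 (fun ω => ((P ω, W1 ω), Q ω)) := by linarith
  have c8 : CMI p W2 B (fun ω => (W1 ω, P ω)) = CMI p B W2 (fun ω => (W1 ω, P ω)) :=
    CMI_symm p W2 B _
  have c9 : CMI p B W2 (fun ω => (W1 ω, P ω)) = CMI p B W2 (fun ω => (P ω, W1 ω)) :=
    CMI_congr p id id id id (fun t => (t.2, t.1)) (fun t => (t.2, t.1))
      (fun _ => rfl) (fun _ => rfl) (fun _ => rfl) (fun _ => rfl) (fun _ => rfl) (fun _ => rfl)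
  have c10 : CMI p B W2 (fun ω => ((P ω, W1 ω), Q ω))
      = CMI p B W2 (fun ω => ((W1 ω, Q ω), P ω)) :=
    CMI_congr p id id id id (fun t => ((t.1.2, t.2), t.1.1)) (fun t => ((t.2, t.1.1), t.1.2))
      (fun _ => rfl) (fun _ => rfl) (fun _ => rfl) (fun _ => rfl) (fun _ => rfl) (fun _ => rfl)
  have c11 : CMI p B (fun ω => (P ω, W2 ω)) (fun ω => (W1 ω, Q ω))
      = CMI p B P (fun ω => (W1 ω, Q ω)) + CMI p B W2 (fun ω => ((W1 ω, Q ω), P ω)) :=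
    CMI_chain p B P W2 (fun ω => (W1 ω, Q ω))
  have n6 : 0 ≤ CMI p B P (fun ω => (W1 ω, Q ω)) := CMI_nonneg p hp0 _ _ _
  have c12 : CMI p B (fun ω => (P ω, W2 ω)) (fun ω => (W1 ω, Q ω))
      = CMI p B (fun ω => (W2 ω, P ω)) (fun ω => (W1 ω, Q ω)) :=
    CMI_congr p id id (fun t => (t.2, t.1)) (fun t => (t.2, t.1)) id id
      (fun _ => rfl) (fun _ => rfl) (fun _ => rfl) (fun _ => rfl) (fun _ => rfl) (fun _ => rfl)
  have c13 : CMI p B (fun ω => (W2 ω, P ω)) (fun ω => (W1 ω, Q ω))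
      = CMI p (fun ω => (W2 ω, P ω)) B (fun ω => (W1 ω, Q ω)) :=
    CMI_symm p B (fun ω => (W2 ω, P ω)) (fun ω => (W1 ω, Q ω))
  have c14 : CMI p (fun ω => (W2 ω, P ω)) B (fun ω => (W1 ω, Q ω))
      = CMI p (fun ω => (W1 ω, W2 ω, P ω)) B (fun ω => (W1 ω, Q ω)) := by
    have e1 : (H p fun ω => ((W2 ω, P ω), (W1 ω, Q ω)))
        = H p fun ω => ((W1 ω, W2 ω, P ω), (W1 ω, Q ω)) :=
      H_congr p (fun t => ((t.2.1, t.1.1, t.1.2), t.2))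
        (fun t => ((t.1.2.1, t.1.2.2), t.2)) (fun _ => rfl) (fun _ => rfl)
    have e2 : (H p fun ω => ((W2 ω, P ω), B ω, (W1 ω, Q ω)))
        = H p fun ω => ((W1 ω, W2 ω, P ω), B ω, (W1 ω, Q ω)) :=
      H_congr p (fun t => ((t.2.2.1, t.1.1, t.1.2), t.2.1, t.2.2))
        (fun t => ((t.1.2.1, t.1.2.2), t.2.1, t.2.2)) (fun _ => rfl) (fun _ => rfl)
    simp only [CMI]
    rw [e1, e2]
  linarith

lemma telescope {𝒲₁ 𝒲₂ β : Type*} [Fintype 𝒲₁] [Fintype 𝒲₂] [Fintype β]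
    (p : Ω → ℝ) (W1 : Ω → 𝒲₁) (W2 : Ω → 𝒲₂) {n : ℕ} (Y2 : Ω → Fin n → β) :
    CMI p W2 Y2 W1
      = ∑ i : Fin n, CMI p W2 (fun ω => Y2 ω i)
          (fun ω => (W1 ω, fun j : {j : Fin n // j < i} => Y2 ω j.1)) := by
  classical
  have main : ∀ m, m ≤ n →
      CMI p W2 (fun ω => fun j : {j : Fin n // j.1 < m} => Y2 ω j.1) W1
        = ∑ i ∈ Finset.univ.filter (fun i : Fin n => i.1 < m),
            CMI p W2 (fun ω => Y2 ω i)
              (fun ω => (W1 ω, fun j : {j : Fin n // j < i} => Y2 ω j.1)) := by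
    intro m
    induction m with
    | zero =>
      intro _
      rw [Finset.filter_false_of_mem (fun i _ => by omega), Finset.sum_empty]
      exact CMI_const_snd p W2 W1 _ (fun j => absurd j.2 (Nat.not_lt_zero _))
        (fun ω => funext fun j => absurd j.2 (Nat.not_lt_zero _))
    | succ k ih =>
      intro hk1
      have hk : k < n := Nat.lt_of_succ_le hk1
      have hins : Finset.univ.filter (fun i : Fin n => i.1 < k + 1)
          = insert (⟨k, hk⟩ : Fin n) (Finset.univ.filter (fun i : Fin n => i.1 < k)) := by
        ext i
        simp only [Finset.mem_filter, Finset.mem_insert, Finset.mem_univ, true_and,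
          Fin.ext_iff]
        omega
      rw [hins, Finset.sum_insert (by simp), ← ih (le_of_lt hk)]
      have hcongr : CMI p W2 (fun ω => fun j : {j : Fin n // j.1 < k + 1} => Y2 ω j.1) W1
          = CMI p W2 (fun ω =>
              ((fun j : {j : Fin n // j.1 < k} => Y2 ω j.1), Y2 ω ⟨k, hk⟩)) W1 :=
        CMI_congr p id id
          (fun h => ((fun j => h ⟨j.1, Nat.lt_succ_of_lt j.2⟩), h ⟨⟨k, hk⟩, Nat.lt_succ_self k⟩))
          (fun t => fun j => if h' : j.1.1 < k then t.1 ⟨j.1, h'⟩ else t.2)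
          id id
          (fun _ => rfl) (fun _ => rfl)
          (fun ω => rfl)
          (fun ω => funext fun j => by
            dsimp only
            split_ifs with h'
            · rfl
            · have hjj := j.2
              have hj : j.1 = ⟨k, hk⟩ := Fin.ext (by simp only [Fin.val_mk] at *; omega)
              rw [hj])
          (fun _ => rfl) (fun _ => rfl)
      have hchain : CMI p W2 (fun ω =>
            ((fun j : {j : Fin n // j.1 < k} => Y2 ω j.1), Y2 ω ⟨k, hk⟩)) W1
          = CMI p W2 (fun ω => fun j : {j : Fin n // j.1 < k} => Y2 ω j.1) W1
            + CMI p W2 (fun ω => Y2 ω ⟨k, hk⟩)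
                (fun ω => (W1 ω, fun j : {j : Fin n // j.1 < k} => Y2 ω j.1)) :=
        CMI_chain p W2 (fun ω => fun j : {j : Fin n // j.1 < k} => Y2 ω j.1)
          (fun ω => Y2 ω ⟨k, hk⟩) W1
      rw [hcongr, hchain]
      exact add_comm _ _
  have h2 : CMI p W2 Y2 W1
      = CMI p W2 (fun ω => fun j : {j : Fin n // j.1 < n} => Y2 ω j.1) W1 :=
    CMI_congr p id id (fun y => fun j => y j.1) (fun t => fun j => t ⟨j, j.2⟩) id id
      (fun _ => rfl) (fun _ => rfl) (fun _ => rfl) (fun _ => rfl) (fun _ => rfl) (fun _ => rfl)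
  have h1 := main n le_rfl
  rw [Finset.filter_true_of_mem (fun i _ => i.2)] at h1
  rw [h2, h1]

end Aux


/-- Single-letterization of the bound on `R₂` in the converse
proof: if for each `i` the prefix `Y₁^{i−1}` is conditionally independent of
`(W₁, W₂, Y_{2,i})` given `Y₂^{i−1}`, then
`I(W₂;Y₂^n|W₁) ≤ ∑_i I(W₁,W₂,Y₂^{i−1}; Y_{2,i} | W₁,Y₁^{i−1})`. -/
theorem single_letterization_R2
    (p : Ω → ℝ) (hp : IsPMF p)
    {𝒲₁ 𝒲₂ α β : Type*} [Fintype 𝒲₁] [Fintype 𝒲₂] [Fintype α] [Fintype β]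
    (W1 : Ω → 𝒲₁) (W2 : Ω → 𝒲₂)
    {n : ℕ} (Y1 : Ω → Fin n → α) (Y2 : Ω → Fin n → β)
    (hci : ∀ i : Fin n,
      MarkovTriple p
        (fun ω => fun j : {j : Fin n // j < i} => Y1 ω j.1)
        (fun ω => fun j : {j : Fin n // j < i} => Y2 ω j.1)
        (fun ω => (W1 ω, W2 ω, Y2 ω i))) :
    CMI p W2 Y2 W1 ≤
      ∑ i : Fin n,
        CMI p (fun ω => (W1 ω, W2 ω, fun j : {j : Fin n // j < i} => Y2 ω j.1))
          (fun ω => Y2 ω i)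
          (fun ω => (W1 ω, fun j : {j : Fin n // j < i} => Y1 ω j.1)) := by
  obtain ⟨hp0, -⟩ := hp
  rw [telescope p W1 W2 Y2]
  refine Finset.sum_le_sum fun i _ => ?_
  exact per_letter_bound p hp0 W1 W2
    (fun ω => fun j : {j : Fin n // j < i} => Y1 ω j.1)
    (fun ω => fun j : {j : Fin n // j < i} => Y2 ω j.1)
    (fun ω => Y2 ω i) (hci i)

end BRSec
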